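/- Let σ > 0, let g_σ denote the density of the Normal distribution N(−σ²/2, σ²), and let Φ denote the cumulative distribution function of the standard Normal distribution. Then for every z ∈ ℝ: ∫_ℝ min(1, exp(z'−z)) g_σ(z') dz' = 1 − Φ((z + σ²/2)/σ) + exp(−z) Φ((z − σ²/2)/σ). -/

import Mathlib

open MeasureTheory ProbabilityTheory

/-- The cumulative distribution function `Φ` of the standard Normal distribution. -/
noncomputable def stdNormalCDF (x : ℝ) : ℝ :=
  ((gaussianReal 0 1) (Set.Iic x)).toReal

lemma gaussian_cdf_aux (m : ℝ) {σ : ℝ} (hσ : 0 < σ) (t : ℝ) :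
    ∫ x in Set.Iic t, gaussianPDFReal m ⟨σ^2, sq_nonneg σ⟩ x
      = stdNormalCDF ((t - m) / σ) := by
  have hv : (⟨σ^2, sq_nonneg σ⟩ : NNReal) ≠ 0 := by
    refine NNReal.coe_ne_zero.mp ?_
    show σ^2 ≠ 0
    positivity
  have h1 : gaussianReal m ⟨σ^2, sq_nonneg σ⟩
      = ((gaussianReal 0 1).map (σ * ·)).map (· + m) := by
    rw [gaussianReal_map_const_mul, gaussianReal_map_add_const]
    congr 1
    · simp
    · ext : 1; simp; rfl
  have h2 : (gaussianReal m ⟨σ^2, sq_nonneg σ⟩) (Set.Iic t)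
      = (gaussianReal 0 1) (Set.Iic ((t - m) / σ)) := by
    rw [h1, Measure.map_apply (measurable_add_const m) measurableSet_Iic,
      Measure.map_apply (measurable_const_mul σ) (by measurability)]
    congr 1
    ext x
    simp only [Set.mem_preimage, Set.mem_Iic]
    rw [le_div_iff₀ hσ]
    constructor
    · intro h; nlinarith
    · intro h; nlinarith
  have h3 := gaussianReal_apply_eq_integral m hv (Set.Iic t)
  rw [h3] at h2
  rw [stdNormalCDF, ← h2, ENNReal.toReal_ofReal]
  exact integral_nonneg fun x => gaussianPDFReal_nonneg _ _ _

lemma pdf_shift_aux {σ : ℝ} (hσ : 0 < σ) (z x : ℝ) :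
    gaussianPDFReal (-σ^2/2) ⟨σ^2, sq_nonneg σ⟩ x * Real.exp (x - z)
      = Real.exp (-z) * gaussianPDFReal (σ^2/2) ⟨σ^2, sq_nonneg σ⟩ x := by
  simp only [gaussianPDFReal]
  change _ * Real.exp (-(x - _) ^ 2 / (2 * σ^2)) * Real.exp (x - z) = Real.exp (-z) * (_ * Real.exp (-(x - _) ^ 2 / (2 * σ^2)))
  rw [mul_assoc, ← Real.exp_add, mul_left_comm, ← Real.exp_add]
  congr 1
  have h : σ^2 ≠ 0 := by positivity
  field_simp
  ring

lemma integral_gaussianReal_aux {m : ℝ} {v : NNReal} (hv : v ≠ 0) (f : ℝ → ℝ) :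
    ∫ x, f x ∂(gaussianReal m v) = ∫ x, gaussianPDFReal m v x * f x := by
  rw [gaussianReal_of_var_ne_zero m hv]
  have h : gaussianPDF m v
      = fun x => ((fun y => (gaussianPDFReal m v y).toNNReal) x : ENNReal) := rfl
  rw [h, integral_withDensity_eq_integral_smul
    (measurable_gaussianPDFReal m v).real_toNNReal f]
  congr 1
  ext x
  simp [NNReal.smul_def, Real.coe_toNNReal _ (gaussianPDFReal_nonneg m v x)]

/-- The average acceptance probability of the limiting PIMH kernel:
`∫ min(1, exp(z'-z)) g_σ(z') dz' = 1 - Φ((z+σ²/2)/σ) + exp(-z) Φ((z-σ²/2)/σ)`,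
where `g_σ` is the `N(-σ²/2, σ²)` proposal distribution. -/
theorem average_acceptance_probability (σ : ℝ) (hσ : 0 < σ) (z : ℝ) :
    ∫ z', min 1 (Real.exp (z' - z))
        ∂(gaussianReal (-σ ^ 2 / 2) ⟨σ ^ 2, sq_nonneg σ⟩)
      = 1 - stdNormalCDF ((z + σ ^ 2 / 2) / σ)
        + Real.exp (-z) * stdNormalCDF ((z - σ ^ 2 / 2) / σ) := by
  have hv : (⟨σ^2, sq_nonneg σ⟩ : NNReal) ≠ 0 := by
    refine NNReal.coe_ne_zero.mp ?_
    show σ^2 ≠ 0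
    positivity
  rw [integral_gaussianReal_aux hv]
  set g : ℝ → ℝ := fun x => gaussianPDFReal (-σ^2/2) ⟨σ^2, sq_nonneg σ⟩ x
    * min 1 (Real.exp (x - z)) with hg_def
  have hmeas : Measurable g :=
    (measurable_gaussianPDFReal _ _).mul
      (measurable_const.min (Real.measurable_exp.comp (measurable_id.sub_const z)))
  have hg : Integrable g := by
    refine (integrable_gaussianPDFReal (-σ^2/2) ⟨σ^2, sq_nonneg σ⟩).mono
      hmeas.aestronglyMeasurable (ae_of_all _ fun x => ?_)
    have h0 : 0 ≤ min 1 (Real.exp (x - z)) := le_min zero_le_one (Real.exp_pos _).le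
    have h1 : 0 ≤ gaussianPDFReal (-σ^2/2) ⟨σ^2, sq_nonneg σ⟩ x :=
      gaussianPDFReal_nonneg _ _ _
    rw [Real.norm_eq_abs, Real.norm_eq_abs, abs_of_nonneg h1,
      abs_of_nonneg (mul_nonneg h1 h0)]
    exact mul_le_of_le_one_right h1 (min_le_left _ _)
  have hsplit := integral_add_compl (measurableSet_Iic (a := z)) hg
  rw [Set.compl_Iic] at hsplit
  have hIic : ∫ x in Set.Iic z, g x
      = Real.exp (-z) * stdNormalCDF ((z - σ^2/2) / σ) := by
    rw [setIntegral_congr_fun measurableSet_Iic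
      (g := fun x => Real.exp (-z) * gaussianPDFReal (σ^2/2) ⟨σ^2, sq_nonneg σ⟩ x)]
    · rw [integral_const_mul, gaussian_cdf_aux _ hσ]
    · intro x hx
      have hx' : x ≤ z := hx
      have : Real.exp (x - z) ≤ 1 := Real.exp_le_one_iff.mpr (by linarith)
      simp only [hg_def, min_eq_right this]
      exact pdf_shift_aux hσ z x
  have hIoi : ∫ x in Set.Ioi z, g x
      = 1 - stdNormalCDF ((z + σ^2/2) / σ) := by
    rw [setIntegral_congr_fun measurableSet_Ioi
      (g := fun x => gaussianPDFReal (-σ^2/2) ⟨σ^2, sq_nonneg σ⟩ x)]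
    · have h4 := integral_add_compl (measurableSet_Iic (a := z))
        (integrable_gaussianPDFReal (-σ^2/2) ⟨σ^2, sq_nonneg σ⟩)
      rw [Set.compl_Iic, integral_gaussianPDFReal_eq_one _ hv,
        gaussian_cdf_aux _ hσ] at h4
      have harg : (z - -σ^2/2) / σ = (z + σ^2/2) / σ := by ring_nf
      rw [harg] at h4
      linarith
    · intro x hx
      have hx' : z < x := hx
      have : (1:ℝ) ≤ Real.exp (x - z) := Real.one_le_exp (by linarith)
      simp only [hg_def, min_eq_left this, mul_one]
  have : ∫ x, g x = (1 - stdNormalCDF ((z + σ^2/2) / σ))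
      + Real.exp (-z) * stdNormalCDF ((z - σ^2/2) / σ) := by
    rw [← hsplit, hIic, hIoi]; ring
  exact this
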